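/- If a relation on a set has no infinite descending chains and is locally confluent (any two one-step reducts of an element have a common reduct under the reflexive-transitive closure), then every element reduces to a unique normal form (Newman's lemma, uniqueness form): each element is related by the reflexive-transitive closure to exactly one element admitting no further reduction. -/

import Mathlib

open Relation

private lemma newman_wf {α : Type*} (r : α → α → Prop)
    (hwf : ¬ ∃ f : ℕ → α, ∀ n, r (f n) (f (n + 1))) :
    WellFounded (fun a b => r b a) := by
  set s := fun a b => r b a with hs
  by_contra h
  have hna : ¬ ∀ a, Acc s a := fun h' => h ⟨h'⟩
  obtain ⟨a, ha⟩ := not_forall.1 hna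
  have step : ∀ x : {b // ¬Acc s b}, ∃ y : {b // ¬Acc s b}, r x.1 y.1 := by
    rintro ⟨x, hx⟩
    obtain ⟨b, hb, hrb⟩ := exists_not_acc_lt_of_not_acc hx
    exact ⟨⟨b, hb⟩, hrb⟩
  choose g hg using step
  refine hwf ⟨fun n => (g^[n] ⟨a, ha⟩).1, fun n => ?_⟩
  simp only []
  rw [Function.iterate_succ_apply']
  exact hg _

private lemma newman_confluent {α : Type*} (r : α → α → Prop)
    (hwf : WellFounded (fun a b => r b a))
    (hlc : ∀ a b c, r a b → r a c →
      ∃ d, Relation.ReflTransGen r b d ∧ Relation.ReflTransGen r c d) :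
    ∀ a b c, Relation.ReflTransGen r a b → Relation.ReflTransGen r a c →
      ∃ d, Relation.ReflTransGen r b d ∧ Relation.ReflTransGen r c d := by
  intro a
  induction a using hwf.induction with
  | _ a ih =>
    intro b c hab hac
    rcases hab.cases_head with rfl | ⟨a₁, ha₁, h₁b⟩
    · exact ⟨c, hac, ReflTransGen.refl⟩
    rcases hac.cases_head with rfl | ⟨a₂, ha₂, h₂c⟩
    · exact ⟨b, ReflTransGen.refl, hab⟩
    obtain ⟨d, h₁d, h₂d⟩ := hlc a a₁ a₂ ha₁ ha₂
    obtain ⟨e, hbe, hde⟩ := ih a₁ ha₁ b d h₁b h₁d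
    obtain ⟨f, hef, hcf⟩ := ih a₂ ha₂ e c (h₂d.trans hde) h₂c
    exact ⟨f, hbe.trans hef, hcf⟩

theorem newman_unique_normal_form {α : Type*} (r : α → α → Prop)
    (hwf : ¬ ∃ f : ℕ → α, ∀ n, r (f n) (f (n + 1)))
    (hlc : ∀ a b c, r a b → r a c →
      ∃ d, Relation.ReflTransGen r b d ∧ Relation.ReflTransGen r c d) :
    ∀ a : α, ∃! n : α, Relation.ReflTransGen r a n ∧ ∀ m, ¬ r n m := by
  have wf := newman_wf r hwf
  have conf := newman_confluent r wf hlc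
  intro a
  -- existence of a normal form by well-founded induction
  have hex : ∀ a : α, ∃ n, Relation.ReflTransGen r a n ∧ ∀ m, ¬ r n m := by
    intro a
    induction a using wf.induction with
    | _ a ih =>
      by_cases h : ∃ b, r a b
      · obtain ⟨b, hb⟩ := h
        obtain ⟨n, hbn, hn⟩ := ih b hb
        exact ⟨n, ReflTransGen.head hb hbn, hn⟩
      · exact ⟨a, ReflTransGen.refl, fun m hm => h ⟨m, hm⟩⟩
  obtain ⟨n, hn, hnf⟩ := hex a
  refine ⟨n, ⟨hn, hnf⟩, ?_⟩
  rintro m ⟨hm, hmf⟩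
  obtain ⟨d, hmd, hnd⟩ := conf a m n hm hn
  have h1 : m = d := by
    rcases hmd.cases_head with rfl | ⟨x, hx, _⟩
    · rfl
    · exact absurd hx (hmf x)
  have h2 : n = d := by
    rcases hnd.cases_head with rfl | ⟨x, hx, _⟩
    · rfl
    · exact absurd hx (hnf x)
  rw [h1, h2]
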